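/- For every u ∈ (0, π/2) and every x ∈ [0, 1] one has D₀(u) + D₂(u)·x + D₄(u)·x² > 0, where D₄(u) = (sin(4u) − 4u)·(4u² + u·sin(4u) + cos(4u) − 1) and D₂(u) = −D₄(u). -/

import Mathlib

open Set Real

lemma chain_aux {F F' : ℝ → ℝ} (hF : ∀ t, HasDerivAt F (F' t) t) (h0 : F 0 = 0)
    (hF' : ∀ t, 0 ≤ t → 0 ≤ F' t) : ∀ t, 0 ≤ t → 0 ≤ F t := by
  intro t ht
  have hdiff : Differentiable ℝ F := fun x => (hF x).differentiableAt
  have hmono : MonotoneOn F (Set.Ici (0:ℝ)) := by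
    apply monotoneOn_of_deriv_nonneg (convex_Ici 0) hdiff.continuous.continuousOn
      (fun x _ => (hdiff x).differentiableWithinAt)
    intro x hx
    rw [(hF x).deriv]
    exact hF' x (le_of_lt (by simpa using hx))
  have := hmono (Set.self_mem_Ici) ht ht
  simpa [h0] using this

lemma T1 : ∀ t : ℝ, 0 ≤ t → 0 ≤ t - Real.sin t := by
  apply chain_aux (F' := fun s => 1 - Real.cos s)
  · intro s
    exact (hasDerivAt_id s).sub (Real.hasDerivAt_sin s)
  · simp
  · intro s _; nlinarith [Real.cos_le_one s]

lemma T2 : ∀ t : ℝ, 0 ≤ t → 0 ≤ Real.cos t - (1 - t^2/2) := by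
  apply chain_aux (F' := fun s => s - Real.sin s)
  · intro s
    rw [show s - Real.sin s = -Real.sin s - (0 - ((2:ℕ):ℝ) * s^1 / 2) by push_cast; ring]
    exact (Real.hasDerivAt_cos s).sub ((hasDerivAt_const s (1:ℝ)).sub ((hasDerivAt_pow 2 s).div_const 2))
  · norm_num
  · exact T1

lemma T3 : ∀ t : ℝ, 0 ≤ t → 0 ≤ Real.sin t - (t - t^3/6) := by
  apply chain_aux (F' := fun s => Real.cos s - (1 - s^2/2))
  · intro s
    rw [show Real.cos s - (1 - s^2/2) = Real.cos s - (1 - ((3:ℕ):ℝ) * s^2 / 6) by push_cast; ring]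
    exact (Real.hasDerivAt_sin s).sub ((hasDerivAt_id s).sub ((hasDerivAt_pow 3 s).div_const 6))
  · norm_num
  · exact T2

lemma T4 : ∀ t : ℝ, 0 ≤ t → 0 ≤ (1 - t^2/2 + t^4/24) - Real.cos t := by
  apply chain_aux (F' := fun s => Real.sin s - (s - s^3/6))
  · intro s
    rw [show Real.sin s - (s - s^3/6) = (0 - ((2:ℕ):ℝ) * s^1 / 2 + ((4:ℕ):ℝ) * s^3 / 24) - -Real.sin s by push_cast; ring]
    exact (((hasDerivAt_const s (1:ℝ)).sub ((hasDerivAt_pow 2 s).div_const 2)).add ((hasDerivAt_pow 4 s).div_const 24)).sub (Real.hasDerivAt_cos s)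
  · norm_num
  · exact T3

lemma T5 : ∀ t : ℝ, 0 ≤ t → 0 ≤ (t - t^3/6 + t^5/120) - Real.sin t := by
  apply chain_aux (F' := fun s => (1 - s^2/2 + s^4/24) - Real.cos s)
  · intro s
    rw [show (1 - s^2/2 + s^4/24) - Real.cos s = (1 - ((3:ℕ):ℝ) * s^2 / 6 + ((5:ℕ):ℝ) * s^4 / 120) - Real.cos s by push_cast; ring]
    exact (((hasDerivAt_id s).sub ((hasDerivAt_pow 3 s).div_const 6)).add ((hasDerivAt_pow 5 s).div_const 120)).sub (Real.hasDerivAt_sin s)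
  · norm_num
  · exact T4

lemma T6 : ∀ t : ℝ, 0 ≤ t → 0 ≤ Real.cos t - (1 - t^2/2 + t^4/24 - t^6/720) := by
  apply chain_aux (F' := fun s => s - s^3/6 + s^5/120 - Real.sin s)
  · intro s
    rw [show s - s^3/6 + s^5/120 - Real.sin s = -Real.sin s - (0 - ((2:ℕ):ℝ) * s^1 / 2 + ((4:ℕ):ℝ) * s^3 / 24 - ((6:ℕ):ℝ) * s^5 / 720) by push_cast; ring]
    exact (Real.hasDerivAt_cos s).sub ((((hasDerivAt_const s (1:ℝ)).sub ((hasDerivAt_pow 2 s).div_const 2)).add ((hasDerivAt_pow 4 s).div_const 24)).sub ((hasDerivAt_pow 6 s).div_const 720))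
  · norm_num
  · exact T5

lemma T7 : ∀ t : ℝ, 0 ≤ t → 0 ≤ Real.sin t - (t - t^3/6 + t^5/120 - t^7/5040) := by
  apply chain_aux (F' := fun s => Real.cos s - (1 - s^2/2 + s^4/24 - s^6/720))
  · intro s
    rw [show Real.cos s - (1 - s^2/2 + s^4/24 - s^6/720) = Real.cos s - (1 - ((3:ℕ):ℝ) * s^2 / 6 + ((5:ℕ):ℝ) * s^4 / 120 - ((7:ℕ):ℝ) * s^6 / 5040) by push_cast; ring]
    exact (Real.hasDerivAt_sin s).sub ((((hasDerivAt_id s).sub ((hasDerivAt_pow 3 s).div_const 6)).add ((hasDerivAt_pow 5 s).div_const 120)).sub ((hasDerivAt_pow 7 s).div_const 5040))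
  · norm_num
  · exact T6

lemma T8 : ∀ t : ℝ, 0 ≤ t → 0 ≤ (1 - t^2/2 + t^4/24 - t^6/720 + t^8/40320) - Real.cos t := by
  apply chain_aux (F' := fun s => Real.sin s - (s - s^3/6 + s^5/120 - s^7/5040))
  · intro s
    rw [show Real.sin s - (s - s^3/6 + s^5/120 - s^7/5040) = (0 - ((2:ℕ):ℝ) * s^1 / 2 + ((4:ℕ):ℝ) * s^3 / 24 - ((6:ℕ):ℝ) * s^5 / 720 + ((8:ℕ):ℝ) * s^7 / 40320) - -Real.sin s by push_cast; ring]
    exact (((((hasDerivAt_const s (1:ℝ)).sub ((hasDerivAt_pow 2 s).div_const 2)).add ((hasDerivAt_pow 4 s).div_const 24)).sub ((hasDerivAt_pow 6 s).div_const 720)).add ((hasDerivAt_pow 8 s).div_const 40320)).sub (Real.hasDerivAt_cos s)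
  · norm_num
  · exact T7

lemma T9 : ∀ t : ℝ, 0 ≤ t → 0 ≤ (t - t^3/6 + t^5/120 - t^7/5040 + t^9/362880) - Real.sin t := by
  apply chain_aux (F' := fun s => (1 - s^2/2 + s^4/24 - s^6/720 + s^8/40320) - Real.cos s)
  · intro s
    rw [show (1 - s^2/2 + s^4/24 - s^6/720 + s^8/40320) - Real.cos s = (1 - ((3:ℕ):ℝ) * s^2 / 6 + ((5:ℕ):ℝ) * s^4 / 120 - ((7:ℕ):ℝ) * s^6 / 5040 + ((9:ℕ):ℝ) * s^8 / 362880) - Real.cos s by push_cast; ring]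
    exact (((((hasDerivAt_id s).sub ((hasDerivAt_pow 3 s).div_const 6)).add ((hasDerivAt_pow 5 s).div_const 120)).sub ((hasDerivAt_pow 7 s).div_const 5040)).add ((hasDerivAt_pow 9 s).div_const 362880)).sub (Real.hasDerivAt_sin s)
  · norm_num
  · exact T8

lemma T10 : ∀ t : ℝ, 0 ≤ t → 0 ≤ Real.cos t - (1 - t^2/2 + t^4/24 - t^6/720 + t^8/40320 - t^10/3628800) := by
  apply chain_aux (F' := fun s => s - s^3/6 + s^5/120 - s^7/5040 + s^9/362880 - Real.sin s)
  · intro s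
    rw [show s - s^3/6 + s^5/120 - s^7/5040 + s^9/362880 - Real.sin s = -Real.sin s - (0 - ((2:ℕ):ℝ) * s^1 / 2 + ((4:ℕ):ℝ) * s^3 / 24 - ((6:ℕ):ℝ) * s^5 / 720 + ((8:ℕ):ℝ) * s^7 / 40320 - ((10:ℕ):ℝ) * s^9 / 3628800) by push_cast; ring]
    exact (Real.hasDerivAt_cos s).sub ((((((hasDerivAt_const s (1:ℝ)).sub ((hasDerivAt_pow 2 s).div_const 2)).add ((hasDerivAt_pow 4 s).div_const 24)).sub ((hasDerivAt_pow 6 s).div_const 720)).add ((hasDerivAt_pow 8 s).div_const 40320)).sub ((hasDerivAt_pow 10 s).div_const 3628800))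
  · norm_num
  · exact T9

lemma T11 : ∀ t : ℝ, 0 ≤ t → 0 ≤ Real.sin t - (t - t^3/6 + t^5/120 - t^7/5040 + t^9/362880 - t^11/39916800) := by
  apply chain_aux (F' := fun s => Real.cos s - (1 - s^2/2 + s^4/24 - s^6/720 + s^8/40320 - s^10/3628800))
  · intro s
    rw [show Real.cos s - (1 - s^2/2 + s^4/24 - s^6/720 + s^8/40320 - s^10/3628800) = Real.cos s - (1 - ((3:ℕ):ℝ) * s^2 / 6 + ((5:ℕ):ℝ) * s^4 / 120 - ((7:ℕ):ℝ) * s^6 / 5040 + ((9:ℕ):ℝ) * s^8 / 362880 - ((11:ℕ):ℝ) * s^10 / 39916800) by push_cast; ring]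
    exact (Real.hasDerivAt_sin s).sub ((((((hasDerivAt_id s).sub ((hasDerivAt_pow 3 s).div_const 6)).add ((hasDerivAt_pow 5 s).div_const 120)).sub ((hasDerivAt_pow 7 s).div_const 5040)).add ((hasDerivAt_pow 9 s).div_const 362880)).sub ((hasDerivAt_pow 11 s).div_const 39916800))
  · norm_num
  · exact T10

lemma T12 : ∀ t : ℝ, 0 ≤ t → 0 ≤ (1 - t^2/2 + t^4/24 - t^6/720 + t^8/40320 - t^10/3628800 + t^12/479001600) - Real.cos t := by
  apply chain_aux (F' := fun s => Real.sin s - (s - s^3/6 + s^5/120 - s^7/5040 + s^9/362880 - s^11/39916800))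
  · intro s
    rw [show Real.sin s - (s - s^3/6 + s^5/120 - s^7/5040 + s^9/362880 - s^11/39916800) = (0 - ((2:ℕ):ℝ) * s^1 / 2 + ((4:ℕ):ℝ) * s^3 / 24 - ((6:ℕ):ℝ) * s^5 / 720 + ((8:ℕ):ℝ) * s^7 / 40320 - ((10:ℕ):ℝ) * s^9 / 3628800 + ((12:ℕ):ℝ) * s^11 / 479001600) - -Real.sin s by push_cast; ring]
    exact (((((((hasDerivAt_const s (1:ℝ)).sub ((hasDerivAt_pow 2 s).div_const 2)).add ((hasDerivAt_pow 4 s).div_const 24)).sub ((hasDerivAt_pow 6 s).div_const 720)).add ((hasDerivAt_pow 8 s).div_const 40320)).sub ((hasDerivAt_pow 10 s).div_const 3628800)).add ((hasDerivAt_pow 12 s).div_const 479001600)).sub (Real.hasDerivAt_cos s)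
  · norm_num
  · exact T11

lemma T13 : ∀ t : ℝ, 0 ≤ t → 0 ≤ (t - t^3/6 + t^5/120 - t^7/5040 + t^9/362880 - t^11/39916800 + t^13/6227020800) - Real.sin t := by
  apply chain_aux (F' := fun s => (1 - s^2/2 + s^4/24 - s^6/720 + s^8/40320 - s^10/3628800 + s^12/479001600) - Real.cos s)
  · intro s
    rw [show (1 - s^2/2 + s^4/24 - s^6/720 + s^8/40320 - s^10/3628800 + s^12/479001600) - Real.cos s = (1 - ((3:ℕ):ℝ) * s^2 / 6 + ((5:ℕ):ℝ) * s^4 / 120 - ((7:ℕ):ℝ) * s^6 / 5040 + ((9:ℕ):ℝ) * s^8 / 362880 - ((11:ℕ):ℝ) * s^10 / 39916800 + ((13:ℕ):ℝ) * s^12 / 6227020800) - Real.cos s by push_cast; ring]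
    exact (((((((hasDerivAt_id s).sub ((hasDerivAt_pow 3 s).div_const 6)).add ((hasDerivAt_pow 5 s).div_const 120)).sub ((hasDerivAt_pow 7 s).div_const 5040)).add ((hasDerivAt_pow 9 s).div_const 362880)).sub ((hasDerivAt_pow 11 s).div_const 39916800)).add ((hasDerivAt_pow 13 s).div_const 6227020800)).sub (Real.hasDerivAt_sin s)
  · norm_num
  · exact T12

lemma T14 : ∀ t : ℝ, 0 ≤ t → 0 ≤ Real.cos t - (1 - t^2/2 + t^4/24 - t^6/720 + t^8/40320 - t^10/3628800 + t^12/479001600 - t^14/87178291200) := by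
  apply chain_aux (F' := fun s => s - s^3/6 + s^5/120 - s^7/5040 + s^9/362880 - s^11/39916800 + s^13/6227020800 - Real.sin s)
  · intro s
    rw [show s - s^3/6 + s^5/120 - s^7/5040 + s^9/362880 - s^11/39916800 + s^13/6227020800 - Real.sin s = -Real.sin s - (0 - ((2:ℕ):ℝ) * s^1 / 2 + ((4:ℕ):ℝ) * s^3 / 24 - ((6:ℕ):ℝ) * s^5 / 720 + ((8:ℕ):ℝ) * s^7 / 40320 - ((10:ℕ):ℝ) * s^9 / 3628800 + ((12:ℕ):ℝ) * s^11 / 479001600 - ((14:ℕ):ℝ) * s^13 / 87178291200) by push_cast; ring]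
    exact (Real.hasDerivAt_cos s).sub ((((((((hasDerivAt_const s (1:ℝ)).sub ((hasDerivAt_pow 2 s).div_const 2)).add ((hasDerivAt_pow 4 s).div_const 24)).sub ((hasDerivAt_pow 6 s).div_const 720)).add ((hasDerivAt_pow 8 s).div_const 40320)).sub ((hasDerivAt_pow 10 s).div_const 3628800)).add ((hasDerivAt_pow 12 s).div_const 479001600)).sub ((hasDerivAt_pow 14 s).div_const 87178291200))
  · norm_num
  · exact T13

lemma T15 : ∀ t : ℝ, 0 ≤ t → 0 ≤ Real.sin t - (t - t^3/6 + t^5/120 - t^7/5040 + t^9/362880 - t^11/39916800 + t^13/6227020800 - t^15/1307674368000) := by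
  apply chain_aux (F' := fun s => Real.cos s - (1 - s^2/2 + s^4/24 - s^6/720 + s^8/40320 - s^10/3628800 + s^12/479001600 - s^14/87178291200))
  · intro s
    rw [show Real.cos s - (1 - s^2/2 + s^4/24 - s^6/720 + s^8/40320 - s^10/3628800 + s^12/479001600 - s^14/87178291200) = Real.cos s - (1 - ((3:ℕ):ℝ) * s^2 / 6 + ((5:ℕ):ℝ) * s^4 / 120 - ((7:ℕ):ℝ) * s^6 / 5040 + ((9:ℕ):ℝ) * s^8 / 362880 - ((11:ℕ):ℝ) * s^10 / 39916800 + ((13:ℕ):ℝ) * s^12 / 6227020800 - ((15:ℕ):ℝ) * s^14 / 1307674368000) by push_cast; ring]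
    exact (Real.hasDerivAt_sin s).sub ((((((((hasDerivAt_id s).sub ((hasDerivAt_pow 3 s).div_const 6)).add ((hasDerivAt_pow 5 s).div_const 120)).sub ((hasDerivAt_pow 7 s).div_const 5040)).add ((hasDerivAt_pow 9 s).div_const 362880)).sub ((hasDerivAt_pow 11 s).div_const 39916800)).add ((hasDerivAt_pow 13 s).div_const 6227020800)).sub ((hasDerivAt_pow 15 s).div_const 1307674368000))
  · norm_num
  · exact T14

lemma T16 : ∀ t : ℝ, 0 ≤ t → 0 ≤ (1 - t^2/2 + t^4/24 - t^6/720 + t^8/40320 - t^10/3628800 + t^12/479001600 - t^14/87178291200 + t^16/20922789888000) - Real.cos t := by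
  apply chain_aux (F' := fun s => Real.sin s - (s - s^3/6 + s^5/120 - s^7/5040 + s^9/362880 - s^11/39916800 + s^13/6227020800 - s^15/1307674368000))
  · intro s
    rw [show Real.sin s - (s - s^3/6 + s^5/120 - s^7/5040 + s^9/362880 - s^11/39916800 + s^13/6227020800 - s^15/1307674368000) = (0 - ((2:ℕ):ℝ) * s^1 / 2 + ((4:ℕ):ℝ) * s^3 / 24 - ((6:ℕ):ℝ) * s^5 / 720 + ((8:ℕ):ℝ) * s^7 / 40320 - ((10:ℕ):ℝ) * s^9 / 3628800 + ((12:ℕ):ℝ) * s^11 / 479001600 - ((14:ℕ):ℝ) * s^13 / 87178291200 + ((16:ℕ):ℝ) * s^15 / 20922789888000) - -Real.sin s by push_cast; ring]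
    exact (((((((((hasDerivAt_const s (1:ℝ)).sub ((hasDerivAt_pow 2 s).div_const 2)).add ((hasDerivAt_pow 4 s).div_const 24)).sub ((hasDerivAt_pow 6 s).div_const 720)).add ((hasDerivAt_pow 8 s).div_const 40320)).sub ((hasDerivAt_pow 10 s).div_const 3628800)).add ((hasDerivAt_pow 12 s).div_const 479001600)).sub ((hasDerivAt_pow 14 s).div_const 87178291200)).add ((hasDerivAt_pow 16 s).div_const 20922789888000)).sub (Real.hasDerivAt_cos s)
  · norm_num
  · exact T15

lemma T17 : ∀ t : ℝ, 0 ≤ t → 0 ≤ (t - t^3/6 + t^5/120 - t^7/5040 + t^9/362880 - t^11/39916800 + t^13/6227020800 - t^15/1307674368000 + t^17/355687428096000) - Real.sin t := by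
  apply chain_aux (F' := fun s => (1 - s^2/2 + s^4/24 - s^6/720 + s^8/40320 - s^10/3628800 + s^12/479001600 - s^14/87178291200 + s^16/20922789888000) - Real.cos s)
  · intro s
    rw [show (1 - s^2/2 + s^4/24 - s^6/720 + s^8/40320 - s^10/3628800 + s^12/479001600 - s^14/87178291200 + s^16/20922789888000) - Real.cos s = (1 - ((3:ℕ):ℝ) * s^2 / 6 + ((5:ℕ):ℝ) * s^4 / 120 - ((7:ℕ):ℝ) * s^6 / 5040 + ((9:ℕ):ℝ) * s^8 / 362880 - ((11:ℕ):ℝ) * s^10 / 39916800 + ((13:ℕ):ℝ) * s^12 / 6227020800 - ((15:ℕ):ℝ) * s^14 / 1307674368000 + ((17:ℕ):ℝ) * s^16 / 355687428096000) - Real.cos s by push_cast; ring]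
    exact (((((((((hasDerivAt_id s).sub ((hasDerivAt_pow 3 s).div_const 6)).add ((hasDerivAt_pow 5 s).div_const 120)).sub ((hasDerivAt_pow 7 s).div_const 5040)).add ((hasDerivAt_pow 9 s).div_const 362880)).sub ((hasDerivAt_pow 11 s).div_const 39916800)).add ((hasDerivAt_pow 13 s).div_const 6227020800)).sub ((hasDerivAt_pow 15 s).div_const 1307674368000)).add ((hasDerivAt_pow 17 s).div_const 355687428096000)).sub (Real.hasDerivAt_sin s)
  · norm_num
  · exact T16

lemma T18 : ∀ t : ℝ, 0 ≤ t → 0 ≤ Real.cos t - (1 - t^2/2 + t^4/24 - t^6/720 + t^8/40320 - t^10/3628800 + t^12/479001600 - t^14/87178291200 + t^16/20922789888000 - t^18/6402373705728000) := by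
  apply chain_aux (F' := fun s => s - s^3/6 + s^5/120 - s^7/5040 + s^9/362880 - s^11/39916800 + s^13/6227020800 - s^15/1307674368000 + s^17/355687428096000 - Real.sin s)
  · intro s
    rw [show s - s^3/6 + s^5/120 - s^7/5040 + s^9/362880 - s^11/39916800 + s^13/6227020800 - s^15/1307674368000 + s^17/355687428096000 - Real.sin s = -Real.sin s - (0 - ((2:ℕ):ℝ) * s^1 / 2 + ((4:ℕ):ℝ) * s^3 / 24 - ((6:ℕ):ℝ) * s^5 / 720 + ((8:ℕ):ℝ) * s^7 / 40320 - ((10:ℕ):ℝ) * s^9 / 3628800 + ((12:ℕ):ℝ) * s^11 / 479001600 - ((14:ℕ):ℝ) * s^13 / 87178291200 + ((16:ℕ):ℝ) * s^15 / 20922789888000 - ((18:ℕ):ℝ) * s^17 / 6402373705728000) by push_cast; ring]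
    exact (Real.hasDerivAt_cos s).sub ((((((((((hasDerivAt_const s (1:ℝ)).sub ((hasDerivAt_pow 2 s).div_const 2)).add ((hasDerivAt_pow 4 s).div_const 24)).sub ((hasDerivAt_pow 6 s).div_const 720)).add ((hasDerivAt_pow 8 s).div_const 40320)).sub ((hasDerivAt_pow 10 s).div_const 3628800)).add ((hasDerivAt_pow 12 s).div_const 479001600)).sub ((hasDerivAt_pow 14 s).div_const 87178291200)).add ((hasDerivAt_pow 16 s).div_const 20922789888000)).sub ((hasDerivAt_pow 18 s).div_const 6402373705728000))
  · norm_num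
  · exact T17

lemma T19 : ∀ t : ℝ, 0 ≤ t → 0 ≤ Real.sin t - (t - t^3/6 + t^5/120 - t^7/5040 + t^9/362880 - t^11/39916800 + t^13/6227020800 - t^15/1307674368000 + t^17/355687428096000 - t^19/121645100408832000) := by
  apply chain_aux (F' := fun s => Real.cos s - (1 - s^2/2 + s^4/24 - s^6/720 + s^8/40320 - s^10/3628800 + s^12/479001600 - s^14/87178291200 + s^16/20922789888000 - s^18/6402373705728000))
  · intro s
    rw [show Real.cos s - (1 - s^2/2 + s^4/24 - s^6/720 + s^8/40320 - s^10/3628800 + s^12/479001600 - s^14/87178291200 + s^16/20922789888000 - s^18/6402373705728000) = Real.cos s - (1 - ((3:ℕ):ℝ) * s^2 / 6 + ((5:ℕ):ℝ) * s^4 / 120 - ((7:ℕ):ℝ) * s^6 / 5040 + ((9:ℕ):ℝ) * s^8 / 362880 - ((11:ℕ):ℝ) * s^10 / 39916800 + ((13:ℕ):ℝ) * s^12 / 6227020800 - ((15:ℕ):ℝ) * s^14 / 1307674368000 + ((17:ℕ):ℝ) * s^16 / 355687428096000 - ((19:ℕ):ℝ) * s^18 / 121645100408832000) by push_cast; ri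ng]
    exact (Real.hasDerivAt_sin s).sub ((((((((((hasDerivAt_id s).sub ((hasDerivAt_pow 3 s).div_const 6)).add ((hasDerivAt_pow 5 s).div_const 120)).sub ((hasDerivAt_pow 7 s).div_const 5040)).add ((hasDerivAt_pow 9 s).div_const 362880)).sub ((hasDerivAt_pow 11 s).div_const 39916800)).add ((hasDerivAt_pow 13 s).div_const 6227020800)).sub ((hasDerivAt_pow 15 s).div_const 1307674368000)).add ((hasDerivAt_pow 17 s).div_const 355687428096000)).sub ((hasDerivAt_pow 19 s).div_const 121645100408832000))
  · norm_num
  · exact T18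

lemma T20 : ∀ t : ℝ, 0 ≤ t → 0 ≤ (1 - t^2/2 + t^4/24 - t^6/720 + t^8/40320 - t^10/3628800 + t^12/479001600 - t^14/87178291200 + t^16/20922789888000 - t^18/6402373705728000 + t^20/2432902008176640000) - Real.cos t := by
  apply chain_aux (F' := fun s => Real.sin s - (s - s^3/6 + s^5/120 - s^7/5040 + s^9/362880 - s^11/39916800 + s^13/6227020800 - s^15/1307674368000 + s^17/355687428096000 - s^19/121645100408832000))
  · intro s
    rw [show Real.sin s - (s - s^3/6 + s^5/120 - s^7/5040 + s^9/362880 - s^11/39916800 + s^13/6227020800 - s^15/1307674368000 + s^17/355687428096000 - s^19/121645100408832000) = (0 - ((2:ℕ):ℝ) * s^1 / 2 + ((4:ℕ):ℝ) * s^3 / 24 - ((6:ℕ):ℝ) * s^5 / 720 + ((8:ℕ):ℝ) * s^7 / 40320 - ((10:ℕ):ℝ) * s^9 / 3628800 + ((12:ℕ):ℝ) * s^11 / 479001600 - ((14:ℕ):ℝ) * s^13 / 87178291200 + ((16:ℕ):ℝ) * s^15 / 20922789888000 - ((18:ℕ):ℝ) * s^17 / 6402373705728000 + ((20:ℕ):ℝ)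 * s^19 / 2432902008176640000) - -Real.sin s by push_cast; ring]
    exact (((((((((((hasDerivAt_const s (1:ℝ)).sub ((hasDerivAt_pow 2 s).div_const 2)).add ((hasDerivAt_pow 4 s).div_const 24)).sub ((hasDerivAt_pow 6 s).div_const 720)).add ((hasDerivAt_pow 8 s).div_const 40320)).sub ((hasDerivAt_pow 10 s).div_const 3628800)).add ((hasDerivAt_pow 12 s).div_const 479001600)).sub ((hasDerivAt_pow 14 s).div_const 87178291200)).add ((hasDerivAt_pow 16 s).div_const 20922789888000)).sub ((hasDerivAt_pow 18 s).div_const 6402373705728000)).add ((hasDerivAt_pow 20 s).div_const 2432902008176640000)).sub (Real.hasDerivAt_cos s)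
  · norm_num
  · exact T19

lemma T21 : ∀ t : ℝ, 0 ≤ t → 0 ≤ (t - t^3/6 + t^5/120 - t^7/5040 + t^9/362880 - t^11/39916800 + t^13/6227020800 - t^15/1307674368000 + t^17/355687428096000 - t^19/121645100408832000 + t^21/51090942171709440000) - Real.sin t := by
  apply chain_aux (F' := fun s => (1 - s^2/2 + s^4/24 - s^6/720 + s^8/40320 - s^10/3628800 + s^12/479001600 - s^14/87178291200 + s^16/20922789888000 - s^18/6402373705728000 + s^20/2432902008176640000) - Real.cos s)
  · intro s
    rw [show (1 - s^2/2 + s^4/24 - s^6/720 + s^8/40320 - s^10/3628800 + s^12/479001600 - s^14/87178291200 + s^16/20922789888000 - s^18/6402373705728000 + s^20/2432902008176640000) - Real.cos s = (1 - ((3:ℕ):ℝ) * s^2 / 6 + ((5:ℕ):ℝ) * s^4 / 120 - ((7:ℕ):ℝ) * s^6 / 5040 + ((9:ℕ):ℝ) * s^8 / 362880 - ((11:ℕ):ℝ) * s^10 / 39916800 + ((13:ℕ):ℝ) * s^12 / 6227020800 - ((15:ℕ):ℝ) * s^14 / 1307674368000 + ((17:ℕ):ℝ) * s^16 / 355687428096000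 - ((19:ℕ):ℝ) * s^18 / 121645100408832000 + ((21:ℕ):ℝ) * s^20 / 51090942171709440000) - Real.cos s by push_cast; ring]
    exact (((((((((((hasDerivAt_id s).sub ((hasDerivAt_pow 3 s).div_const 6)).add ((hasDerivAt_pow 5 s).div_const 120)).sub ((hasDerivAt_pow 7 s).div_const 5040)).add ((hasDerivAt_pow 9 s).div_const 362880)).sub ((hasDerivAt_pow 11 s).div_const 39916800)).add ((hasDerivAt_pow 13 s).div_const 6227020800)).sub ((hasDerivAt_pow 15 s).div_const 1307674368000)).add ((hasDerivAt_pow 17 s).div_const 355687428096000)).sub ((hasDerivAt_pow 19 s).div_const 121645100408832000)).add ((hasDerivAt_pow 21 s).div_const 51090942171709440000)).sub (Real.hasDerivAt_sin s)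
  · norm_num
  · exact T20

lemma T22 : ∀ t : ℝ, 0 ≤ t → 0 ≤ Real.cos t - (1 - t^2/2 + t^4/24 - t^6/720 + t^8/40320 - t^10/3628800 + t^12/479001600 - t^14/87178291200 + t^16/20922789888000 - t^18/6402373705728000 + t^20/2432902008176640000 - t^22/1124000727777607680000) := by
  apply chain_aux (F' := fun s => s - s^3/6 + s^5/120 - s^7/5040 + s^9/362880 - s^11/39916800 + s^13/6227020800 - s^15/1307674368000 + s^17/355687428096000 - s^19/121645100408832000 + s^21/51090942171709440000 - Real.sin s)
  · intro s
    rw [show s - s^3/6 + s^5/120 - s^7/5040 + s^9/362880 - s^11/39916800 + s^13/6227020800 - s^15/1307674368000 + s^17/355687428096000 - s^19/121645100408832000 + s^21/51090942171709440000 - Real.sin s = -Real.sin s - (0 - ((2:ℕ):ℝ) * s^1 / 2 + ((4:ℕ):ℝ) * s^3 / 24 - ((6:ℕ):ℝ) * s^5 / 720 + ((8:ℕ):ℝ) * s^7 / 40320 - ((10:ℕ):ℝ) * s^9 / 3628800 + ((12:ℕ):ℝ) * s^11 / 479001600 - ((14:ℕ):ℝ) * s^13 / 87178291200 + ((16:ℕ):ℝ)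 * s^15 / 20922789888000 - ((18:ℕ):ℝ) * s^17 / 6402373705728000 + ((20:ℕ):ℝ) * s^19 / 2432902008176640000 - ((22:ℕ):ℝ) * s^21 / 1124000727777607680000) by push_cast; ring]
    exact (Real.hasDerivAt_cos s).sub ((((((((((((hasDerivAt_const s (1:ℝ)).sub ((hasDerivAt_pow 2 s).div_const 2)).add ((hasDerivAt_pow 4 s).div_const 24)).sub ((hasDerivAt_pow 6 s).div_const 720)).add ((hasDerivAt_pow 8 s).div_const 40320)).sub ((hasDerivAt_pow 10 s).div_const 3628800)).add ((hasDerivAt_pow 12 s).div_const 479001600)).sub ((hasDerivAt_pow 14 s).div_const 87178291200)).add ((hasDerivAt_pow 16 s).div_const 20922789888000)).sub ((hasDerivAt_pow 18 s).div_const 6402373705728000)).add ((hasDerivAt_pow 20 s).div_const 2432902008176640000)).sub ((hasDerivAt_pow 22 s).div_const 1124000727777607680000))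
  · norm_num
  · exact T21

lemma Rpos (v : ℝ) (h0 : 0 < v) (h1 : v ≤ 24675/10000) :
    0 < (32764/4725:ℝ) - (723004/155925:ℝ)*v + (52488/35035:ℝ)*v^2 - (39366/125125:ℝ)*v^3 + (708588/14889875:ℝ)*v^4 - (708588/128594375:ℝ)*v^5 - (38263752/108919435625:ℝ)*v^6 := by
  have hq : (0:ℝ) ≤ 24675/10000 - v := by linarith
  nlinarith [mul_nonneg (pow_nonneg h0.le 0) (pow_nonneg hq 6),
    mul_nonneg (pow_nonneg h0.le 1) (pow_nonneg hq 5),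
    mul_nonneg (pow_nonneg h0.le 2) (pow_nonneg hq 4),
    mul_nonneg (pow_nonneg h0.le 3) (pow_nonneg hq 3),
    mul_nonneg (pow_nonneg h0.le 4) (pow_nonneg hq 2),
    mul_nonneg (pow_nonneg h0.le 5) (pow_nonneg hq 1),
    pow_pos h0 6]

lemma Spos (v : ℝ) (h0 : 0 ≤ v) (h1 : v ≤ 24675/10000) :
    0 ≤ (128/45:ℝ) - (512/315:ℝ)*v + (2048/4725:ℝ)*v^2 - (32768/467775:ℝ)*v^3 - (131072/42567525:ℝ)*v^4 := by
  have hq : (0:ℝ) ≤ 24675/10000 - v := by linarith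
  nlinarith [mul_nonneg (pow_nonneg h0 0) (pow_nonneg hq 4),
    mul_nonneg (pow_nonneg h0 1) (pow_nonneg hq 3),
    mul_nonneg (pow_nonneg h0 2) (pow_nonneg hq 2),
    mul_nonneg (pow_nonneg h0 3) (pow_nonneg hq 1),
    mul_nonneg (pow_nonneg h0 4) (pow_nonneg hq 0)]

set_option maxHeartbeats 1600000 in
/-- Lemma: `D₀(u) + D₂(u)·x + D₄(u)·x² > 0` for `u ∈ (0, π/2)`, `x ∈ [0,1]`,
where `D₄(u) = (sin(4u) − 4u)·(4u² + u·sin(4u) + cos(4u) − 1)` and `D₂ = −D₄`. -/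
theorem J10_C2_pos :
    ∀ u ∈ Ioo 0 (π/2), ∀ x ∈ Icc (0:ℝ) 1,
      0 < (1/8) * cos u * sin u *
            ((-48 * u ^ 2 - 3) * cos (2 * u) + 3 * cos (6 * u)
              + (42 * u - 64 * u ^ 3) * sin (2 * u) + 2 * u * sin (6 * u))
          + (-((sin (4 * u) - 4 * u) * (4 * u ^ 2 + u * sin (4 * u) + cos (4 * u) - 1))) * x
          + ((sin (4 * u) - 4 * u) * (4 * u ^ 2 + u * sin (4 * u) + cos (4 * u) - 1)) * x ^ 2 := by
  intro u hu x hx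
  obtain ⟨hu0, hu2⟩ := hu
  obtain ⟨hx0, hx1⟩ := hx
  have hub : u ≤ 15708/10000 := by nlinarith [Real.pi_lt_d6]
  have hv : u^2 ≤ 24675/10000 := by nlinarith
  have h2u : (0:ℝ) ≤ 2*u := by linarith
  have h4u : (0:ℝ) ≤ 4*u := by linarith
  have h6u : (0:ℝ) ≤ 6*u := by linarith
  -- bounds on trig functions
  have m1 : 0 ≤ (48*u^2+3) * ((1 - (2*u)^2/2 + (2*u)^4/24 - (2*u)^6/720 + (2*u)^8/40320) - Real.cos (2*u)) :=
    mul_nonneg (by positivity) (T8 (2*u) h2u)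
  have m2 : 0 ≤ (42*u) * (Real.sin (2*u) - ((2*u) - (2*u)^3/6 + (2*u)^5/120 - (2*u)^7/5040 + (2*u)^9/362880 - (2*u)^11/39916800)) :=
    mul_nonneg (by positivity) (T11 (2*u) h2u)
  have m3 : 0 ≤ (64*u^3) * (((2*u) - (2*u)^3/6 + (2*u)^5/120 - (2*u)^7/5040 + (2*u)^9/362880) - Real.sin (2*u)) :=
    mul_nonneg (by positivity) (T9 (2*u) h2u)
  have m4 : 0 ≤ (3:ℝ) * (Real.cos (6*u) - (1 - (6*u)^2/2 + (6*u)^4/24 - (6*u)^6/720 + (6*u)^8/40320 - (6*u)^10/3628800 + (6*u)^12/479001600 - (6*u)^14/87178291200 + (6*u)^16/20922789888000 - (6*u)^18/6402373705728000 + (6*u)^20/2432902008176640000 - (6*u)^22/1124000727777607680000)) :=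
    mul_nonneg (by norm_num) (T22 (6*u) h6u)
  have m5 : 0 ≤ (2*u) * (Real.sin (6*u) - ((6*u) - (6*u)^3/6 + (6*u)^5/120 - (6*u)^7/5040 + (6*u)^9/362880 - (6*u)^11/39916800 + (6*u)^13/6227020800 - (6*u)^15/1307674368000 + (6*u)^17/355687428096000 - (6*u)^19/121645100408832000)) :=
    mul_nonneg (by positivity) (T19 (6*u) h6u)
  have hR : 0 < u^10 * ((32764/4725:ℝ) - (723004/155925:ℝ)*(u^2) + (52488/35035:ℝ)*(u^2)^2 - (39366/125125:ℝ)*(u^2)^3 + (708588/14889875:ℝ)*(u^2)^4 - (708588/128594375:ℝ)*(u^2)^5 - (38263752/108919435625:ℝ)*(u^2)^6) :=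
    mul_pos (pow_pos hu0 10) (Rpos (u^2) (by positivity) hv)
  have hbracket : 0 < (-48 * u ^ 2 - 3) * Real.cos (2 * u) + 3 * Real.cos (6 * u)
      + (42 * u - 64 * u ^ 3) * Real.sin (2 * u) + 2 * u * Real.sin (6 * u) := by
    linarith [m1, m2, m3, m4, m5, hR]
  have hcos : 0 < Real.cos u := Real.cos_pos_of_mem_Ioo ⟨by linarith [Real.pi_pos], hu2⟩
  have hsin : 0 < Real.sin u := Real.sin_pos_of_pos_of_lt_pi hu0 (by linarith [Real.pi_pos])
  have hD0 : 0 < (1/8) * Real.cos u * Real.sin u *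
      ((-48 * u ^ 2 - 3) * Real.cos (2 * u) + 3 * Real.cos (6 * u)
        + (42 * u - 64 * u ^ 3) * Real.sin (2 * u) + 2 * u * Real.sin (6 * u)) := by
    have h8 : (0:ℝ) < 1/8 := by norm_num
    exact mul_pos (mul_pos (mul_pos h8 hcos) hsin) hbracket
  -- D4 ≤ 0
  have m6 : 0 ≤ u * (Real.sin (4*u) - ((4*u) - (4*u)^3/6 + (4*u)^5/120 - (4*u)^7/5040 + (4*u)^9/362880 - (4*u)^11/39916800)) :=
    mul_nonneg hu0.le (T11 (4*u) h4u)
  have m7 := T14 (4*u) h4u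
  have hS : 0 ≤ u^6 * ((128/45:ℝ) - (512/315:ℝ)*(u^2) + (2048/4725:ℝ)*(u^2)^2 - (32768/467775:ℝ)*(u^2)^3 - (131072/42567525:ℝ)*(u^2)^4) :=
    mul_nonneg (pow_nonneg hu0.le 6) (Spos (u^2) (by positivity) hv)
  have hf : 0 ≤ 4 * u ^ 2 + u * Real.sin (4 * u) + Real.cos (4 * u) - 1 := by
    linarith [m6, m7, hS]
  have hsin4 : 0 ≤ 4*u - Real.sin (4*u) := T1 (4*u) h4u
  have hprod : 0 ≤ (4*u - Real.sin (4*u)) * (4 * u ^ 2 + u * Real.sin (4 * u) + Real.cos (4 * u) - 1) :=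
    mul_nonneg hsin4 hf
  have hx2 : 0 ≤ x * (1 - x) := mul_nonneg hx0 (by linarith)
  have hfin : 0 ≤ ((4*u - Real.sin (4*u)) * (4 * u ^ 2 + u * Real.sin (4 * u) + Real.cos (4 * u) - 1)) * (x * (1-x)) :=
    mul_nonneg hprod hx2
  linarith [hD0, hfin]
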